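/- The variance of the mixture-target/mixture-proposal estimator is at most that of the mixture-target/individual-proposal estimator: Var[MM(g)] ≤ Var[MI(g)] (both sides allowed to be infinite). Equivalently, since both estimators are unbiased for I = ∫ p_mix·g dx, one has N·∫ (p_mix·g/q_mix)²·q_mix dx − N·I² ≤ Σ_{i=1}^N ( ∫ (p_mix·g/q_i)²·q_i dx − I² ). -/

import Mathlib

open MeasureTheory ProbabilityTheory Finset
open scoped ENNReal NNReal

section AuxVarianceMM

lemma pointwise_jensen' {N : ℕ} (hN : 0 < N) (q : Fin N → ℝ) (hq0 : ∀ i, 0 ≤ q i)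
    (pm gg c : ℝ) (habs : ∀ i, q i = 0 → pm = 0) :
    (N : ℝ) * ((pm / ((N : ℝ)⁻¹ * ∑ i, q i) * gg - c) ^ 2 * ((N : ℝ)⁻¹ * ∑ i, q i))
      ≤ ∑ i, (pm / q i * gg - c) ^ 2 * q i := by
  have hNR : (0:ℝ) < N := by exact_mod_cast hN
  haveI : Nonempty (Fin N) := ⟨⟨0, hN⟩⟩
  by_cases h0 : ∃ i, q i = 0
  · obtain ⟨i0, hi0⟩ := h0
    have hpm : pm = 0 := habs i0 hi0
    subst hpm
    simp only [zero_div, zero_mul, zero_sub, neg_sq]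
    rw [← Finset.mul_sum]
    have : (N:ℝ) * (c ^ 2 * ((N : ℝ)⁻¹ * ∑ i, q i)) = c ^ 2 * ∑ i, q i := by
      field_simp
    linarith
  · push_neg at h0
    have hq : ∀ i, 0 < q i := fun i => lt_of_le_of_ne (hq0 i) (Ne.symm (h0 i))
    set S := ∑ i, q i with hS
    have hSpos : 0 < S := Finset.sum_pos (fun i _ => hq i) Finset.univ_nonempty
    set a := pm * gg with ha
    have expand : ∀ i, (pm / q i * gg - c) ^ 2 * q i
        = a ^ 2 * (q i)⁻¹ - 2 * a * c + c ^ 2 * q i := by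
      intro i
      have := (hq i).ne'
      field_simp
      ring
    have expand2 : (N : ℝ) * ((pm / ((N : ℝ)⁻¹ * S) * gg - c) ^ 2 * ((N : ℝ)⁻¹ * S))
        = a ^ 2 * ((N:ℝ) * (N:ℝ) / S) - 2 * a * c * N + c ^ 2 * S := by
      have := hSpos.ne'
      field_simp
      ring
    have hCS : (N:ℝ) * (N:ℝ) ≤ S * ∑ i, (q i)⁻¹ := by
      have h := Finset.sum_sq_le_sum_mul_sum_of_sq_eq_mul Finset.univ
        (f := q) (g := fun i => (q i)⁻¹) (r := fun _ => (1:ℝ))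
        (fun i _ => (hq i).le) (fun i _ => (inv_nonneg.mpr (hq i).le))
        (fun i _ => by rw [one_pow, mul_inv_cancel₀ (hq i).ne'])
      rw [← pow_two]
      simpa [Finset.sum_const, Finset.card_univ] using h
    have key : a ^ 2 * ((N:ℝ) * (N:ℝ) / S) ≤ a ^ 2 * ∑ i, (q i)⁻¹ := by
      apply mul_le_mul_of_nonneg_left _ (sq_nonneg a)
      rw [div_le_iff₀ hSpos]
      nlinarith [hCS]
    calc (N : ℝ) * ((pm / ((N : ℝ)⁻¹ * S) * gg - c) ^ 2 * ((N : ℝ)⁻¹ * S))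
        = a ^ 2 * ((N:ℝ) * (N:ℝ) / S) - 2 * a * c * N + c ^ 2 * S := expand2
      _ ≤ a ^ 2 * (∑ i, (q i)⁻¹) - 2 * a * c * N + c ^ 2 * S := by linarith
      _ = ∑ i, (a ^ 2 * (q i)⁻¹ - 2 * a * c + c ^ 2 * q i) := by
          simp only [Finset.sum_add_distrib, Finset.sum_sub_distrib, ← Finset.mul_sum,
            Finset.sum_const, Finset.card_univ, Fintype.card_fin, nsmul_eq_mul, hS]
          ring
      _ = ∑ i, (pm / q i * gg - c) ^ 2 * q i :=
          Finset.sum_congr rfl (fun i _ => (expand i).symm)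

variable {Ω : Type} [MeasurableSpace Ω] {μ : Measure Ω} [IsProbabilityMeasure μ]

lemma memℒp_left_of_add' {A B : Ω → ℝ} (hA : Measurable A) (hB : Measurable B)
    (hAB : IndepFun A B μ) (h : MemLp (fun ω => A ω + B ω) 2 μ) : MemLp A 2 μ := by
  have hprod : μ.map (fun ω => (A ω, B ω)) = (μ.map A).prod (μ.map B) :=
    (indepFun_iff_map_prod_eq_prod_map_map hA.aemeasurable hB.aemeasurable).mp hAB
  haveI : IsProbabilityMeasure (μ.map A) := Measure.isProbabilityMeasure_map hA.aemeasurable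
  haveI : IsProbabilityMeasure (μ.map B) := Measure.isProbabilityMeasure_map hB.aemeasurable
  have hint : Integrable (fun ω => (A ω + B ω) ^ 2) μ :=
    (memLp_two_iff_integrable_sq ((hA.add hB).aestronglyMeasurable)).mp h
  have hint2 : Integrable (fun z : ℝ × ℝ => (z.1 + z.2) ^ 2) ((μ.map A).prod (μ.map B)) := by
    rw [← hprod]
    rw [integrable_map_measure (g := fun z : ℝ × ℝ => (z.1 + z.2) ^ 2)
      (((measurable_fst.add measurable_snd).pow_const 2).aestronglyMeasurable)
      ((hA.prodMk hB).aemeasurable)]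
    exact hint
  have hae : ∀ᵐ y ∂(μ.map B), Integrable (fun x => (x + y) ^ 2) (μ.map A) :=
    hint2.prod_left_ae
  obtain ⟨y, hy⟩ := hae.exists
  have hxsq : Integrable (fun x : ℝ => x ^ 2) (μ.map A) := by
    have hbound : ∀ x : ℝ, ‖x ^ 2‖ ≤ 2 * (x + y) ^ 2 + 2 * y ^ 2 := by
      intro x
      rw [Real.norm_eq_abs, abs_of_nonneg (sq_nonneg x)]
      nlinarith [sq_nonneg (x + 2*y)]
    exact Integrable.mono' ((hy.const_mul 2).add (integrable_const (2 * y ^ 2)))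
      (by fun_prop) (ae_of_all _ hbound)
  have : MemLp (fun x : ℝ => x) 2 (μ.map A) :=
    (memLp_two_iff_integrable_sq measurable_id.aestronglyMeasurable).mpr hxsq
  exact (memLp_map_measure_iff measurable_id.aestronglyMeasurable hA.aemeasurable).mp this

lemma evariance_sum' {N : ℕ} (Z : Fin N → Ω → ℝ) (hm : ∀ i, Measurable (Z i))
    (hind : iIndepFun Z μ) :
    evariance (fun ω => ∑ i, Z i ω) μ = ∑ i, evariance (Z i) μ := by
  classical
  have hfn : ∀ (s : Finset (Fin N)), (∑ j ∈ s, Z j) = fun ω => ∑ j ∈ s, Z j ω := by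
    intro s; funext ω; simp [Finset.sum_apply]
  by_cases hL2 : ∀ i, MemLp (Z i) 2 μ
  · have hvs : variance (∑ i, Z i) μ = ∑ i, variance (Z i) μ :=
      IndepFun.variance_sum (fun i _ => hL2 i)
        (fun i _ j _ hij => hind.indepFun hij)
    have hmem : MemLp (∑ i, Z i) 2 μ := memLp_finsetSum' _ (fun i _ => hL2 i)
    rw [← hfn, ← hmem.ofReal_variance_eq, hvs,
      ENNReal.ofReal_sum_of_nonneg (fun i _ => variance_nonneg _ _)]
    exact Finset.sum_congr rfl (fun i _ => (hL2 i).ofReal_variance_eq)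
  · push_neg at hL2
    obtain ⟨i, hi⟩ := hL2
    have hrhs : ∑ i, evariance (Z i) μ = ⊤ :=
      ENNReal.sum_eq_top.mpr ⟨i, Finset.mem_univ i,
        evariance_eq_top (hm i).aestronglyMeasurable hi⟩
    rw [hrhs]
    rw [evariance_eq_top ((Finset.measurable_sum _ (fun j _ => hm j)).aestronglyMeasurable) ?_]
    intro hmem
    apply hi
    have hindAB : IndepFun (∑ j ∈ Finset.univ.erase i, Z j) (Z i) μ :=
      hind.indepFun_finsetSum_of_notMem hm (Finset.notMem_erase i Finset.univ)
    rw [hfn] at hindAB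
    refine memℒp_left_of_add' (hm i)
      (Finset.measurable_sum _ (fun j _ => hm j)) hindAB.symm ?_
    have heq : (fun ω => Z i ω + ∑ j ∈ Finset.univ.erase i, Z j ω)
        = fun ω => ∑ j, Z j ω := by
      funext ω
      exact Finset.add_sum_erase _ (fun j => Z j ω) (Finset.mem_univ i)
    rw [heq]
    exact hmem

variable {d : ℕ}

lemma integral_comp_law (ρ : (Fin d → ℝ) → ℝ) (hρ0 : ∀ x, 0 ≤ ρ x) (hρm : Measurable ρ)
    (X : Ω → (Fin d → ℝ)) (hXm : Measurable X)
    (hlaw : μ.map X = volume.withDensity (fun x => ENNReal.ofReal (ρ x)))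
    (F : (Fin d → ℝ) → ℝ) (hFm : Measurable F) :
    ∫ ω, F (X ω) ∂μ = ∫ x, ρ x * F x := by
  have h1 : ∫ ω, F (X ω) ∂μ = ∫ x, F x ∂(μ.map X) :=
    (integral_map hXm.aemeasurable hFm.aestronglyMeasurable).symm
  rw [h1, hlaw]
  rw [show (fun x => ENNReal.ofReal (ρ x)) = (fun x => ((ρ x).toNNReal : ℝ≥0∞)) from rfl,
    integral_withDensity_eq_integral_smul (hρm.real_toNNReal) F]
  congr 1
  funext x
  rw [NNReal.smul_def, smul_eq_mul, Real.coe_toNNReal _ (hρ0 x)]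

lemma lintegral_comp_law (ρ : (Fin d → ℝ) → ℝ) (hρm : Measurable ρ)
    (X : Ω → (Fin d → ℝ)) (hXm : Measurable X)
    (hlaw : μ.map X = volume.withDensity (fun x => ENNReal.ofReal (ρ x)))
    (G : (Fin d → ℝ) → ℝ≥0∞) (hGm : Measurable G) :
    ∫⁻ ω, G (X ω) ∂μ = ∫⁻ x, ENNReal.ofReal (ρ x) * G x := by
  rw [← lintegral_map hGm hXm, hlaw,
    lintegral_withDensity_eq_lintegral_mul _ (hρm.ennreal_ofReal) hGm]
  rfl

end AuxVarianceMM

/-- `Var[MM(g)] ≤ Var[MI(g)]` (both sides allowed to be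
infinite, i.e. taken as `evariance` with values in `[0,∞]`). -/
theorem variance_MM_le_variance_MI
    {d N : ℕ} (hN : 1 ≤ N)
    {Ω : Type} [MeasurableSpace Ω] (μ : Measure Ω) [IsProbabilityMeasure μ]
    (p q : Fin N → (Fin d → ℝ) → ℝ)
    (hp0 : ∀ i x, 0 ≤ p i x) (hq0 : ∀ i x, 0 ≤ q i x)
    (hpm : ∀ i, Measurable (p i)) (hqm : ∀ i, Measurable (q i))
    (hp1 : ∀ i, ∫ x, p i x = 1) (hq1 : ∀ i, ∫ x, q i x = 1)
    (pmix qmix : (Fin d → ℝ) → ℝ)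
    (hpmix : ∀ x, pmix x = (N : ℝ)⁻¹ * ∑ i, p i x)
    (hqmix : ∀ x, qmix x = (N : ℝ)⁻¹ * ∑ i, q i x)
    -- absolute continuity p_mix ≪ q_i
    (habs : ∀ i, ∀ᵐ x : Fin d → ℝ ∂volume, q i x = 0 → pmix x = 0)
    (g : (Fin d → ℝ) → ℝ) (hgm : Measurable g)
    -- ∫ p_mix · g² dx < ∞
    (hgL2 : Integrable (fun x => pmix x * (g x) ^ 2) volume)
    -- X_i independent with density q_i; Y_i i.i.d. with density q_mix
    (X Y : Fin N → Ω → (Fin d → ℝ))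
    (hXm : ∀ i, Measurable (X i)) (hYm : ∀ i, Measurable (Y i))
    (hXindep : iIndepFun X μ)
    (hYindep : iIndepFun Y μ)
    (hXlaw : ∀ i, Measure.map (X i) μ =
      volume.withDensity (fun x => ENNReal.ofReal (q i x)))
    (hYlaw : ∀ i, Measure.map (Y i) μ =
      volume.withDensity (fun x => ENNReal.ofReal (qmix x))) :
    -- Var[MM(g)] ≤ Var[MI(g)]
    evariance (fun ω => (N : ℝ)⁻¹ * ∑ i, (pmix (Y i ω) / qmix (Y i ω)) * g (Y i ω)) μ
      ≤ evariance (fun ω => (N : ℝ)⁻¹ * ∑ i, (pmix (X i ω) / q i (X i ω)) * g (X i ω)) μ := by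
  classical
  have hN0 : 0 < N := hN
  -- measurability of the mixtures and estimator integrands
  have hpmixm : Measurable pmix := by
    rw [show pmix = fun x => (N:ℝ)⁻¹ * ∑ i, p i x from funext hpmix]
    exact measurable_const.mul (Finset.measurable_sum _ fun i _ => hpm i)
  have hqmixm : Measurable qmix := by
    rw [show qmix = fun x => (N:ℝ)⁻¹ * ∑ i, q i x from funext hqmix]
    exact measurable_const.mul (Finset.measurable_sum _ fun i _ => hqm i)
  have hqmix0 : ∀ x, 0 ≤ qmix x := by
    intro x
    rw [hqmix x]
    have h1 : (0:ℝ) ≤ (N:ℝ)⁻¹ := by positivity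
    exact mul_nonneg h1 (Finset.sum_nonneg fun i _ => hq0 i x)
  have hFm : ∀ i, Measurable (fun x => pmix x / q i x * g x) :=
    fun i => (hpmixm.div (hqm i)).mul hgm
  have hGm : Measurable (fun x => pmix x / qmix x * g x) :=
    (hpmixm.div hqmixm).mul hgm
  set c : ℝ := ∫ x, pmix x * g x with hc
  -- a.e. absolute continuity statements
  have haeAll : ∀ᵐ x : Fin d → ℝ ∂volume, ∀ i, q i x = 0 → pmix x = 0 :=
    (ae_all_iff).mpr habs
  have haeQmix : ∀ᵐ x ∂volume, qmix x = 0 → pmix x = 0 := by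
    filter_upwards [haeAll] with x hx hq0x
    have hsum : ∑ i, q i x = 0 := by
      have h1 : (N:ℝ)⁻¹ * ∑ i, q i x = 0 := by rw [← hqmix x]; exact hq0x
      have hNne : ((N:ℝ))⁻¹ ≠ 0 := by positivity
      exact (mul_eq_zero.mp h1).resolve_left hNne
    exact hx ⟨0, hN0⟩
      ((Finset.sum_eq_zero_iff_of_nonneg (fun i _ => hq0 i x)).mp hsum ⟨0, hN0⟩ (Finset.mem_univ _))
  -- the common mean
  have hmeanX : ∀ i, ∫ ω, pmix (X i ω) / q i (X i ω) * g (X i ω) ∂μ = c := by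
    intro i
    have h1 : ∫ ω, pmix (X i ω) / q i (X i ω) * g (X i ω) ∂μ
        = ∫ x, q i x * (pmix x / q i x * g x) :=
      integral_comp_law (q i) (hq0 i) (hqm i) (X i) (hXm i) (hXlaw i) _ (hFm i)
    rw [h1, hc]
    apply integral_congr_ae
    filter_upwards [habs i] with x hx
    by_cases h : q i x = 0
    · simp [h, hx h]
    · field_simp
  have hmeanY : ∀ i, ∫ ω, pmix (Y i ω) / qmix (Y i ω) * g (Y i ω) ∂μ = c := by
    intro i
    have h1 : ∫ ω, pmix (Y i ω) / qmix (Y i ω) * g (Y i ω) ∂μ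
        = ∫ x, qmix x * (pmix x / qmix x * g x) :=
      integral_comp_law qmix hqmix0 hqmixm (Y i) (hYm i) (hYlaw i) _ hGm
    rw [h1, hc]
    apply integral_congr_ae
    filter_upwards [haeQmix] with x hx
    by_cases h : qmix x = 0
    · simp [h, hx h]
    · field_simp
  -- evariance of the individual terms, as Lebesgue integrals
  have hVxm : ∀ i, Measurable (fun x => ENNReal.ofReal ((pmix x / q i x * g x - c) ^ 2)) :=
    fun i => (((hFm i).sub measurable_const).pow_const 2).ennreal_ofReal
  have hWm : Measurable (fun x => ENNReal.ofReal ((pmix x / qmix x * g x - c) ^ 2)) :=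
    ((hGm.sub measurable_const).pow_const 2).ennreal_ofReal
  have hevX : ∀ i, evariance (fun ω => pmix (X i ω) / q i (X i ω) * g (X i ω)) μ
      = ∫⁻ x, ENNReal.ofReal (q i x) * ENNReal.ofReal ((pmix x / q i x * g x - c) ^ 2) := by
    intro i
    rw [evariance_eq_lintegral_ofReal, hmeanX i]
    exact lintegral_comp_law (q i) (hqm i) (X i) (hXm i) (hXlaw i) _ (hVxm i)
  have hevY : ∀ i, evariance (fun ω => pmix (Y i ω) / qmix (Y i ω) * g (Y i ω)) μ
      = ∫⁻ x, ENNReal.ofReal (qmix x) * ENNReal.ofReal ((pmix x / qmix x * g x - c) ^ 2) := by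
    intro i
    rw [evariance_eq_lintegral_ofReal, hmeanY i]
    exact lintegral_comp_law qmix hqmixm (Y i) (hYm i) (hYlaw i) _ hWm
  -- independence of the estimator terms
  have hindX : iIndepFun
      (fun i ω => pmix (X i ω) / q i (X i ω) * g (X i ω)) μ :=
    hXindep.comp (fun i x => pmix x / q i x * g x) hFm
  have hindY : iIndepFun
      (fun i ω => pmix (Y i ω) / qmix (Y i ω) * g (Y i ω)) μ :=
    hYindep.comp (fun _ x => pmix x / qmix x * g x) (fun _ => hGm)
  -- reduce to the sums
  rw [evariance_mul, evariance_mul]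
  apply mul_le_mul_right
  rw [evariance_sum' (fun i ω => pmix (X i ω) / q i (X i ω) * g (X i ω))
      (fun i => (hFm i).comp (hXm i)) hindX,
    evariance_sum' (fun i ω => pmix (Y i ω) / qmix (Y i ω) * g (Y i ω))
      (fun i => hGm.comp (hYm i)) hindY]
  calc ∑ i, evariance (fun ω => pmix (Y i ω) / qmix (Y i ω) * g (Y i ω)) μ
      = (N : ℝ≥0∞) * ∫⁻ x, ENNReal.ofReal (qmix x)
          * ENNReal.ofReal ((pmix x / qmix x * g x - c) ^ 2) := by
        rw [Finset.sum_congr rfl (fun i _ => hevY i), Finset.sum_const, Finset.card_univ,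
          Fintype.card_fin, nsmul_eq_mul]
    _ = ∫⁻ x, (N : ℝ≥0∞) * (ENNReal.ofReal (qmix x)
          * ENNReal.ofReal ((pmix x / qmix x * g x - c) ^ 2)) := by
        rw [← lintegral_const_mul' _ _ (by simp : (N : ℝ≥0∞) ≠ ⊤)]
    _ ≤ ∫⁻ x, ∑ i, ENNReal.ofReal (q i x)
          * ENNReal.ofReal ((pmix x / q i x * g x - c) ^ 2) := by
        apply lintegral_mono_ae
        filter_upwards [haeAll] with x hx
        have hjen := pointwise_jensen' hN0 (fun i => q i x) (fun i => hq0 i x)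
          (pmix x) (g x) c (fun i h => hx i h)
        rw [← hqmix x] at hjen
        calc (N : ℝ≥0∞) * (ENNReal.ofReal (qmix x)
              * ENNReal.ofReal ((pmix x / qmix x * g x - c) ^ 2))
            = ENNReal.ofReal ((N : ℝ)
                * ((pmix x / qmix x * g x - c) ^ 2 * qmix x)) := by
              rw [ENNReal.ofReal_mul (by positivity : (0:ℝ) ≤ (N:ℝ)),
                ENNReal.ofReal_mul (sq_nonneg _), ENNReal.ofReal_natCast, mul_comm
                (ENNReal.ofReal ((pmix x / qmix x * g x - c) ^ 2)) (ENNReal.ofReal (qmix x))]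
          _ ≤ ENNReal.ofReal (∑ i, (pmix x / q i x * g x - c) ^ 2 * q i x) :=
              ENNReal.ofReal_le_ofReal hjen
          _ = ∑ i, ENNReal.ofReal (q i x)
                * ENNReal.ofReal ((pmix x / q i x * g x - c) ^ 2) := by
              rw [ENNReal.ofReal_sum_of_nonneg
                (fun i _ => mul_nonneg (sq_nonneg _) (hq0 i x))]
              refine Finset.sum_congr rfl (fun i _ => ?_)
              rw [ENNReal.ofReal_mul (sq_nonneg _), mul_comm]
    _ = ∑ i, ∫⁻ x, ENNReal.ofReal (q i x)
          * ENNReal.ofReal ((pmix x / q i x * g x - c) ^ 2) := by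
        rw [← lintegral_finset_sum _
          (f := fun i x => ENNReal.ofReal (q i x) * ENNReal.ofReal ((pmix x / q i x * g x - c) ^ 2))
          (fun i _ => ((hqm i).ennreal_ofReal).mul (hVxm i))]
    _ = ∑ i, evariance (fun ω => pmix (X i ω) / q i (X i ω) * g (X i ω)) μ :=
        Finset.sum_congr rfl (fun i _ => (hevX i).symm)
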